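/- For all permutations σ and τ of {1,…,k}, if the strings L_1 = mdolBWT(M,σ) and L_2 = mdolBWT(M,τ) differ at a position p (i.e., L_1[p] ≠ L_2[p]), then p belongs to some interesting interval [b,e] of M, i.e., b ≤ p ≤ e. -/

import Mathlib

set_option linter.unusedSectionVars false
set_option linter.unusedVariables false


/-- The `j`-th rotation of a string. -/
def rot {β : Type*} (l : List β) (j : ℕ) : List β := l.drop j ++ l.take j

/-- Nonstrict lexicographic order on strings. -/
def listLe {β : Type*} [LT β] (X Y : List β) : Prop := X = Y ∨ List.Lex (· < ·) X Y

/-- `T·$`, over the alphabet extended with a sentinel `⊥` smaller than every symbol. -/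
def dstr {α : Type*} (T : List α) : List (WithBot α) :=
  (T.map (fun a => (a : WithBot α))) ++ [⊥]

/-- The multiset (list) of all rotations of the strings `T_i·$`. -/
def dolRots {α : Type*} {k : ℕ} (T : Fin k → List α) : List (List (WithBot α)) :=
  (List.finRange k).flatMap fun i =>
    (List.range (dstr (T i)).length).map (rot (dstr (T i)))

/-- The character preceding the suffix `U` in `Ti`: the last character of `W` where
`Ti = W·U`, and the sentinel `⊥` (i.e. `$`) if `U = Ti`. -/
def precChar {α : Type*} (Ti U : List α) : WithBot α :=
  match (Ti.take (Ti.length - U.length)).getLast? with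
  | none => ⊥
  | some a => (a : WithBot α)

/-- `U` defines an interesting interval: `U` is a suffix of two different input strings
and the characters preceding these two occurrences differ. -/
def Interesting {α : Type*} {k : ℕ} (T : Fin k → List α) (U : List α) : Prop :=
  ∃ i j : Fin k, i ≠ j ∧ U <:+ T i ∧ U <:+ T j ∧ precChar (T i) U ≠ precChar (T j) U

/-- The set of ranks, in the lexicographically sorted list `L0` of rotations of the
`T_i·$`, of the rotations beginning with `U·$`. -/
def rankSet {α : Type*} (L0 : List (List (WithBot α))) (U : List α) : Set ℕ :=
  {p | ∃ R, L0[p]? = some R ∧ dstr U <+: R}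

/-- The string `W_σ = T_{σ(1)}$_1 T_{σ(2)}$_2 ⋯ T_{σ(k)}$_k` over the alphabet
`Fin k ⊕ₗ α` (separators `toLex (Sum.inl p)` are pairwise distinct, increasing, and
smaller than every symbol of `Σ`). -/
def mWord {α : Type*} {k : ℕ} (T : Fin k → List α) (σ : Equiv.Perm (Fin k)) :
    List (Fin k ⊕ₗ α) :=
  (List.finRange k).flatMap fun p =>
    ((T (σ p)).map fun a => toLex (Sum.inr a)) ++ [toLex (Sum.inl p)]

/-- The multiset (list) of all rotations of `W_σ`. -/
def mRots {α : Type*} {k : ℕ} (T : Fin k → List α) (σ : Equiv.Perm (Fin k)) :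
    List (List (Fin k ⊕ₗ α)) :=
  (List.range (mWord T σ).length).map (rot (mWord T σ))

/-- The last character of a rotation, with every separator replaced by the single
sentinel `$` (here `⊥`). -/
def lastOut {α : Type*} {k : ℕ} (R : List (Fin k ⊕ₗ α)) : WithBot α :=
  match R.getLast? with
  | none => ⊥
  | some b => match ofLex b with
    | Sum.inl _ => ⊥
    | Sum.inr a => (a : WithBot α)

/-- The multidollar BWT read off from a lexicographically sorted list `L` of the
rotations of `W_σ`. -/
def mdolOf {α : Type*} {k : ℕ} (L : List (List (Fin k ⊕ₗ α))) : List (WithBot α) :=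
  L.map lastOut


/-! ### Auxiliary definitions and lemmas -/

section AuxDefs

/-- Normalized form of `dstr`. -/
def dstrE {α : Type*} (T : List α) : List (WithBot α) := T.map WithBot.some ++ [⊥]

lemma dstr_eq {α : Type*} (T : List α) : dstr T = dstrE T := by
  have : ∀ (l : List α), (l.map (fun a => (a : WithBot α))) = l.map WithBot.some := by
    intro l; induction l with
    | nil => rfl
    | cons a l ih => show _ :: _ = _ :: _ ; rw [← ih]; rfl
  rw [dstr, this]; rfl

lemma dstrE_inj {α : Type*} {X Y : List α} (h : dstrE X = dstrE Y) : X = Y := by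
  unfold dstrE at h
  have h2 : X.map WithBot.some = Y.map WithBot.some := (List.append_inj' h rfl).1
  exact List.map_injective_iff.mpr WithBot.coe_injective h2

/-- key of a multidollar rotation: prefix up to (and incl., as `⊥`) the first separator. -/
def keyF {α : Type*} {k : ℕ} : List (Fin k ⊕ₗ α) → List (WithBot α)
  | [] => [⊥]
  | x :: l => match ofLex x with
    | .inl _ => [⊥]
    | .inr a => (a : WithBot α) :: keyF l

/-- key of a dollar rotation. -/
def key0F {α : Type*} [DecidableEq α] : List (WithBot α) → List (WithBot α)
  | [] => [⊥]
  | x :: l => if x = ⊥ then [⊥] else x :: key0F l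

lemma keyF_app {α : Type*} {k : ℕ} (X : List α) (q : Fin k) (Y : List (Fin k ⊕ₗ α)) :
    keyF ((X.map (fun a => toLex (Sum.inr a))) ++ (toLex (Sum.inl q) :: Y)) = dstrE X := by
  induction X with
  | nil => simp [keyF, dstrE]
  | cons a X ih =>
    have h1 : (((a :: X).map (fun a => toLex (Sum.inr a))) ++ (toLex (Sum.inl q) :: Y))
        = toLex (Sum.inr a) :: ((X.map (fun a => toLex (Sum.inr a))) ++ (toLex (Sum.inl q) :: Y)) := rfl
    have h2 : keyF (toLex (Sum.inr a) :: ((X.map (fun a => toLex (Sum.inr a))) ++ (toLex (Sum.inl q) :: Y)))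
        = (a : WithBot α) :: keyF ((X.map (fun a => toLex (Sum.inr a))) ++ (toLex (Sum.inl q) :: Y)) := rfl
    rw [h1, h2, ih]
    rfl

def blk {α : Type*} {k : ℕ} (S : List α) (q : Fin k) : List (Fin k ⊕ₗ α) :=
  (S.map fun a => toLex (Sum.inr a)) ++ [toLex (Sum.inl q)]

def endsInl {α : Type*} {k : ℕ} (C : List (Fin k ⊕ₗ α)) : Prop :=
  C = [] ∨ ∃ q', C.getLast? = some (toLex (Sum.inl q'))

end AuxDefs

section AuxOrder
variable {α : Type*} [LinearOrder α] {k : ℕ}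

lemma keyF_mono : ∀ {R R' : List (Fin k ⊕ₗ α)}, List.Lex (· < ·) R R' →
    listLe (keyF R) (keyF R') := by
  intro R R' h
  induction h with
  | nil =>
    rename_i a l
    rcases x : ofLex a with q | b
    · left; simp [keyF, x]
    · right; simp only [keyF, x]
      exact List.Lex.rel (by exact_mod_cast WithBot.bot_lt_coe b)
  | @cons a l₁ l₂ h ih =>
    rcases x : ofLex a with q | b
    · left; simp [keyF, x]
    · simp only [keyF, x]
      rcases ih with h' | h'
      · left; rw [h']
      · right; exact List.Lex.cons h'
  | @rel a₁ l₁ a₂ l₂ hab =>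
    rcases x1 : ofLex a₁ with q1 | b1 <;> rcases x2 : ofLex a₂ with q2 | b2
    · left; simp [keyF, x1, x2]
    · right; simp only [keyF, x1, x2]
      exact List.Lex.rel (by exact_mod_cast WithBot.bot_lt_coe b2)
    · exfalso
      have : a₂ < a₁ := by
        rw [← (toLex_ofLex a₁ : _), ← (toLex_ofLex a₂ : _), x1, x2]
        exact Sum.Lex.sep _ _
      exact absurd hab (lt_asymm this)
    · have hb : b1 ≤ b2 := by
        have : toLex (Sum.inr b1 : Fin k ⊕ α) < toLex (Sum.inr b2) := by
          rw [← x1, ← x2, toLex_ofLex, toLex_ofLex]; exact hab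
        exact le_of_lt (Sum.Lex.inr_lt_inr_iff.mp this)
      rcases lt_or_eq_of_le hb with hb | hb
      · right; simp only [keyF, x1, x2]
        exact List.Lex.rel (by exact_mod_cast hb)
      · exfalso
        have : a₁ = a₂ := by
          rw [← (toLex_ofLex a₁ : _), ← (toLex_ofLex a₂ : _), x1, x2, hb]
        exact absurd hab (by rw [this]; exact lt_irrefl _)

lemma key0F_mono : ∀ {R R' : List (WithBot α)}, List.Lex (· < ·) R R' →
    listLe (key0F R) (key0F R') := by
  intro R R' h
  induction h with
  | nil =>
    rename_i a l
    by_cases x : a = ⊥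
    · left; simp [key0F, x]
    · right; simp only [key0F, if_neg x]
      exact List.Lex.rel (Ne.bot_lt x)
  | @cons a l₁ l₂ h ih =>
    by_cases x : a = ⊥
    · left; simp [key0F, x]
    · simp only [key0F, if_neg x]
      rcases ih with h' | h'
      · left; rw [h']
      · right; exact List.Lex.cons h'
  | @rel a₁ l₁ a₂ l₂ hab =>
    by_cases x1 : a₁ = ⊥
    · by_cases x2 : a₂ = ⊥
      · left; simp [key0F, x1, x2]
      · right; simp only [key0F, if_pos x1, if_neg x2]
        exact List.Lex.rel (Ne.bot_lt x2)
    · have x2 : a₂ ≠ ⊥ := by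
        intro h2; rw [h2] at hab; exact absurd hab (by simp)
      right; simp only [key0F, if_neg x1, if_neg x2]
      exact List.Lex.rel hab

lemma listLe_keyF_mono {R R' : List (Fin k ⊕ₗ α)} (h : listLe R R') :
    listLe (keyF R) (keyF R') := by
  rcases h with rfl | h
  · left; rfl
  · exact keyF_mono h

lemma listLe_key0F_mono {R R' : List (WithBot α)} (h : listLe R R') :
    listLe (key0F R) (key0F R') := by
  rcases h with rfl | h
  · left; rfl
  · exact key0F_mono h

lemma listLe_antisymm : ∀ (X Y : List (WithBot α)), listLe X Y → listLe Y X → X = Y := by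
  intro X Y hxy hyx
  rcases hxy with rfl | h1
  · rfl
  rcases hyx with rfl | h2
  · rfl
  · exact absurd h2 (asymm h1)

end AuxOrder

section AuxRot
variable {α : Type*} [LinearOrder α] {k : ℕ}

lemma precChar_drop (S : List α) (o : ℕ) (ho : o ≤ S.length) :
    precChar S (S.drop o) = if h : o = 0 then ⊥ else (S[o-1]'(by omega) : WithBot α) := by
  unfold precChar
  have hlen : S.length - (S.drop o).length = o := by simp; omega
  rw [hlen]
  rcases Nat.eq_zero_or_pos o with h0 | h0
  · simp [h0]
  · have h1 : (S.take o).getLast? = some (S[o-1]'(by omega)) := by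
      rw [List.getLast?_eq_getElem?]
      have : (S.take o).length = o := by simp; omega
      rw [this, List.getElem?_take]
      simp only [if_pos (by omega : o - 1 < o)]
      exact List.getElem?_eq_getElem (by omega)
    rw [h1]
    simp [Nat.pos_iff_ne_zero.mp h0]

lemma main1 (S : List α) (q : Fin k) (C : List (Fin k ⊕ₗ α)) (hC : endsInl C)
    (o : ℕ) (ho : o ≤ S.length) :
    keyF (rot (blk S q ++ C) o) = dstrE (S.drop o) ∧
    lastOut (rot (blk S q ++ C) o) = precChar S (S.drop o) := by
  have hlenmap : (S.map fun a => (toLex (Sum.inr a) : Fin k ⊕ₗ α)).length = S.length := by simp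
  have hdrop : (blk S q ++ C).drop o
      = ((S.drop o).map fun a => toLex (Sum.inr a)) ++ (toLex (Sum.inl q) :: C) := by
    rw [List.drop_append_of_le_length (by simp [blk]; omega), blk,
      List.drop_append_of_le_length (by omega), List.map_drop]
    simp
  have htake : (blk S q ++ C).take o = (S.take o).map fun a => toLex (Sum.inr a) := by
    rw [List.take_append_of_le_length (by simp [blk]; omega), blk,
      List.take_append_of_le_length (by omega), List.map_take]
  constructor
  · rw [rot, hdrop]
    have : (((S.drop o).map fun a => (toLex (Sum.inr a) : Fin k ⊕ₗ α)) ++ (toLex (Sum.inl q) :: C))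
        ++ (blk S q ++ C).take o
        = ((S.drop o).map fun a => toLex (Sum.inr a)) ++
          (toLex (Sum.inl q) :: (C ++ (blk S q ++ C).take o)) := by
      simp
    rw [this, keyF_app]
  · rw [rot, precChar_drop S o ho]
    rcases Nat.eq_zero_or_pos o with h0 | h0
    · subst h0
      simp only [List.drop_zero, List.take_zero, List.append_nil, dif_pos]
      unfold lastOut
      rcases hC with hC | ⟨q', hC⟩
      · subst hC
        rw [List.append_nil, blk, List.getLast?_concat]
        rfl
      · rw [List.getLast?_append, hC]
        rfl
    · have hne : o ≠ 0 := by omega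
      rw [dif_neg hne]
      unfold lastOut
      rw [List.getLast?_append, htake, List.getLast?_map]
      have h1 : (S.take o).getLast? = some (S[o-1]'(by omega)) := by
        rw [List.getLast?_eq_getElem?]
        have : (S.take o).length = o := by simp; omega
        rw [this, List.getElem?_take]
        simp only [if_pos (by omega : o - 1 < o)]
        exact List.getElem?_eq_getElem (by omega)
      rw [h1]
      rfl

lemma rot_append {β : Type*} (A B : List β) (o : ℕ) (ho : o ≤ B.length) :
    rot (A ++ B) (A.length + o) = rot (B ++ A) o := by
  unfold rot
  rw [List.drop_append, List.take_append,
      List.drop_append_of_le_length ho, List.take_append_of_le_length ho]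
  simp [List.drop_eq_nil_of_le (by omega : A.length ≤ A.length + o),
    List.take_of_length_le (by omega : A.length ≤ A.length + o)]

def canonP (S : List α) : List (List (WithBot α) × WithBot α) :=
  (List.range (S.length + 1)).map (fun o => (dstrE (S.drop o), precChar S (S.drop o)))

def Fpair {α : Type*} {k : ℕ} (R : List (Fin k ⊕ₗ α)) : List (WithBot α) × WithBot α :=
  (keyF R, lastOut R)

lemma blk_endsInl (S : List α) (q : Fin k) :
    ∃ q', (blk S q).getLast? = some (toLex (Sum.inl q')) :=
  ⟨q, by rw [blk, List.getLast?_concat]⟩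

lemma endsInl_append_right (D C : List (Fin k ⊕ₗ α))
    (hC : ∃ q', C.getLast? = some (toLex (Sum.inl q'))) : endsInl (D ++ C) := by
  obtain ⟨q', hq⟩ := hC
  right
  exact ⟨q', by rw [List.getLast?_append, hq]; rfl⟩

lemma flat_endsInl (bs : List (List α × Fin k)) (acc : List (Fin k ⊕ₗ α)) (hacc : endsInl acc) :
    endsInl ((bs.flatMap fun ip => blk ip.1 ip.2) ++ acc) := by
  induction bs with
  | nil => simpa using hacc
  | cons ip rest ih =>
    have : (((ip :: rest).flatMap fun ip => blk ip.1 ip.2) ++ acc)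
        = blk ip.1 ip.2 ++ (((rest).flatMap fun ip => blk ip.1 ip.2) ++ acc) := by
      simp [List.flatMap_cons]
    rw [this]
    rcases ih with h | h
    · rw [h, List.append_nil]
      exact Or.inr (blk_endsInl _ _)
    · exact endsInl_append_right _ _ h

lemma main2 : ∀ (bs : List (List α × Fin k)) (acc : List (Fin k ⊕ₗ α)), endsInl acc →
    (List.range ((bs.flatMap fun ip => blk ip.1 ip.2).length)).map
        (fun j => Fpair (rot ((bs.flatMap fun ip => blk ip.1 ip.2) ++ acc) j))
      = bs.flatMap (fun ip => canonP ip.1) := by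
  intro bs
  induction bs with
  | nil => intro acc _; simp
  | cons ip rest ih =>
    intro acc hacc
    obtain ⟨S, q⟩ := ip
    have hflat : (((S, q) :: rest).flatMap fun ip => blk ip.1 ip.2)
        = blk S q ++ (rest.flatMap fun ip => blk ip.1 ip.2) := by
      simp [List.flatMap_cons]
    set A := blk S q with hA
    set Bf := (rest.flatMap fun ip => blk ip.1 ip.2) with hBf
    have hAlen : A.length = S.length + 1 := by simp [hA, blk]
    rw [hflat, List.length_append, List.range_add, List.map_append, List.flatMap_cons]
    congr 1
    · rw [hAlen]
      show _ = canonP S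
      rw [canonP]
      apply List.map_congr_left
      intro j hj
      rw [List.mem_range] at hj
      have hj' : j ≤ S.length := by omega
      have hassoc : (A ++ Bf) ++ acc = A ++ (Bf ++ acc) := by rw [List.append_assoc]
      rw [hassoc]
      have hC : endsInl (Bf ++ acc) := flat_endsInl rest acc hacc
      obtain ⟨h1, h2⟩ := main1 S q (Bf ++ acc) hC j hj'
      rw [Fpair, h1, h2]
    · rw [List.map_map]
      rw [← ih (acc ++ A) (endsInl_append_right _ _ (blk_endsInl S q))]
      apply List.map_congr_left
      intro o ho
      rw [List.mem_range] at ho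
      show Fpair (rot ((A ++ Bf) ++ acc) (A.length + o)) = _
      have hassoc : (A ++ Bf) ++ acc = A ++ (Bf ++ acc) := by rw [List.append_assoc]
      rw [hassoc, rot_append A (Bf ++ acc) o (by rw [List.length_append]; omega)]
      congr 1
      rw [List.append_assoc]

lemma key0F_app (X : List α) (Y : List (WithBot α)) :
    key0F (X.map WithBot.some ++ (⊥ :: Y)) = dstrE X := by
  induction X with
  | nil => simp [key0F, dstrE]
  | cons a X ih =>
    have h1 : ((a :: X).map WithBot.some ++ (⊥ :: Y))
        = WithBot.some a :: (X.map WithBot.some ++ (⊥ :: Y)) := rfl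
    rw [h1, key0F, if_neg (by exact WithBot.coe_ne_bot), ih]
    rfl

lemma key0F_dstrE_append (X : List α) (Z : List (WithBot α)) :
    key0F (dstrE X ++ Z) = dstrE X := by
  have : dstrE X ++ Z = X.map WithBot.some ++ (⊥ :: Z) := by
    rw [dstrE, List.append_assoc]; rfl
  rw [this, key0F_app]

lemma mWord_eq (T : Fin k → List α) (σ : Equiv.Perm (Fin k)) :
    mWord T σ = ((List.finRange k).map fun p => (T (σ p), p)).flatMap fun ip => blk ip.1 ip.2 := by
  rw [List.flatMap_map]
  rfl

lemma mRots_fpair (T : Fin k → List α) (σ : Equiv.Perm (Fin k)) :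
    (mRots T σ).map Fpair = (List.finRange k).flatMap fun p => canonP (T (σ p)) := by
  have h := main2 ((List.finRange k).map fun p => (T (σ p), p)) [] (Or.inl rfl)
  rw [List.append_nil] at h
  rw [mRots, List.map_map, mWord_eq T σ]
  have h2 : (Fpair ∘ rot (((List.finRange k).map fun p => (T (σ p), p)).flatMap
      fun ip => blk ip.1 ip.2)) = fun j => Fpair (rot (((List.finRange k).map
      fun p => (T (σ p), p)).flatMap fun ip => blk ip.1 ip.2) j) := rfl
  rw [h2, h, List.flatMap_map]

lemma rot_dstrE (S : List α) (o : ℕ) (ho : o ≤ S.length) :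
    rot (dstrE S) o = dstrE (S.drop o) ++ (S.take o).map WithBot.some := by
  rw [rot, dstrE, List.drop_append_of_le_length (by simp; omega),
      List.take_append_of_le_length (by simp; omega), ← List.map_drop, ← List.map_take, dstrE]

lemma key0F_rot (S : List α) (o : ℕ) (ho : o ≤ S.length) :
    key0F (rot (dstrE S) o) = dstrE (S.drop o) := by
  rw [rot_dstrE S o ho, key0F_dstrE_append]

lemma dolRots_key (T : Fin k → List α) :
    (dolRots T).map key0F = (List.finRange k).flatMap fun i => (canonP (T i)).map Prod.fst := by
  rw [dolRots, List.map_flatMap]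
  refine congrArg (fun f => List.flatMap f (List.finRange k)) (funext fun i => ?_)
  rw [List.map_map, canonP, List.map_map]
  have hlen : (dstr (T i)).length = (T i).length + 1 := by
    rw [dstr_eq]; simp [dstrE]
  rw [hlen]
  apply List.map_congr_left
  intro o ho
  rw [List.mem_range] at ho
  show key0F (rot (dstr (T i)) o) = _
  rw [dstr_eq, key0F_rot (T i) o (by omega)]
  rfl

lemma perm_flat {γ : Type*} (σ : Equiv.Perm (Fin k)) (g : Fin k → List γ) :
    ((List.finRange k).flatMap fun p => g (σ p)).Perm ((List.finRange k).flatMap g) := by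
  have h1 : ((List.finRange k).map σ).Perm (List.finRange k) := by
    apply List.perm_of_nodup_nodup_toFinset_eq
    · exact (List.nodup_finRange k).map σ.injective
    · exact List.nodup_finRange k
    · ext x
      simp only [List.mem_toFinset, List.mem_map, List.mem_finRange, true_and, iff_true]
      exact ⟨σ.symm x, σ.apply_symm_apply x⟩
  have h2 := h1.flatMap_right g
  rw [List.flatMap_map] at h2
  exact h2

lemma mem_mRots_struct (T : Fin k → List α) (σ : Equiv.Perm (Fin k))
    {R : List (Fin k ⊕ₗ α)} (hR : R ∈ mRots T σ) :
    ∃ i o, o ≤ (T i).length ∧ keyF R = dstrE ((T i).drop o) ∧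
      lastOut R = precChar (T i) ((T i).drop o) := by
  have h : Fpair R ∈ (mRots T σ).map Fpair := List.mem_map_of_mem hR
  rw [mRots_fpair, List.mem_flatMap] at h
  obtain ⟨p', _, hmem⟩ := h
  rw [canonP, List.mem_map] at hmem
  obtain ⟨o, hor, heq⟩ := hmem
  rw [List.mem_range] at hor
  exact ⟨σ p', o, by omega, (congrArg Prod.fst heq).symm, (congrArg Prod.snd heq).symm⟩

lemma mem_dolRots_struct (T : Fin k → List α) {R : List (WithBot α)} (hR : R ∈ dolRots T) :
    ∃ i o, o ≤ (T i).length ∧ R = dstrE ((T i).drop o) ++ ((T i).take o).map WithBot.some := by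
  rw [dolRots, List.mem_flatMap] at hR
  obtain ⟨i, _, hmem⟩ := hR
  rw [List.mem_map] at hmem
  obtain ⟨o, hor, rfl⟩ := hmem
  rw [List.mem_range] at hor
  have ho : o ≤ (T i).length := by
    rw [dstr_eq] at hor; simp [dstrE] at hor; omega
  exact ⟨i, o, ho, by rw [dstr_eq, rot_dstrE _ _ ho]⟩

lemma rankSet_eq (T : Fin k → List α) (L0 : List (List (WithBot α)))
    (hperm0 : L0.Perm (dolRots T)) (U : List α) :
    rankSet L0 U = {q | (L0.map key0F)[q]? = some (dstrE U)} := by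
  ext q
  simp only [rankSet, Set.mem_setOf_eq, List.getElem?_map]
  constructor
  · rintro ⟨R, hR, Z, rfl⟩
    rw [hR]
    show some (key0F _) = _
    rw [dstr_eq, key0F_dstrE_append]
  · intro h
    obtain ⟨R, hR, hk⟩ : ∃ R, L0[q]? = some R ∧ key0F R = dstrE U := by
      cases hq : L0[q]? with
      | none => rw [hq] at h; simp at h
      | some R =>
        rw [hq] at h
        simp only [Option.map_some] at h
        exact ⟨R, rfl, Option.some.inj h⟩
    refine ⟨R, hR, ?_⟩
    have hmem : R ∈ L0 := by
      rw [List.getElem?_eq_some_iff] at hR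
      obtain ⟨hlt, rfl⟩ := hR
      exact List.getElem_mem hlt
    obtain ⟨i, o, ho, rfl⟩ := mem_dolRots_struct T (hperm0.mem_iff.mp hmem)
    rw [key0F_dstrE_append] at hk
    rw [dstr_eq, ← dstrE_inj hk]
    exact List.prefix_append _ _

end AuxRot

/-- If `mdolBWT(M,σ)` and `mdolBWT(M,τ)` differ at a position `p`, then
`p` belongs to some interesting interval `[b,e]` of `M`, i.e. `b ≤ p ≤ e`.  Here
`L0` is the lexicographically sorted list of rotations of the `T_i·$` (defining the
ranks of interesting intervals), and `L1`, `L2` are the sorted rotation lists of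
`W_σ`, `W_τ`. -/
theorem mdolBWT_differences_in_interesting_intervals {α : Type*} [LinearOrder α]
    (k : ℕ) (hk : 2 ≤ k) (T : Fin k → List α) (hT : ∀ i, T i ≠ [])
    (σ τ : Equiv.Perm (Fin k))
    (L0 : List (List (WithBot α))) (hperm0 : L0.Perm (dolRots T))
    (hsort0 : L0.Pairwise listLe)
    (L1 L2 : List (List (Fin k ⊕ₗ α)))
    (hperm1 : L1.Perm (mRots T σ)) (hsort1 : L1.Pairwise listLe)
    (hperm2 : L2.Perm (mRots T τ)) (hsort2 : L2.Pairwise listLe)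
    (p : ℕ) (hp : (mdolOf L1)[p]? ≠ (mdolOf L2)[p]?) :
    ∃ (U : List α) (b e : ℕ), Interesting T U ∧
      IsLeast (rankSet L0 U) b ∧ IsGreatest (rankSet L0 U) e ∧
      b ≤ p ∧ p ≤ e := by
  classical
  haveI : IsAntisymm (List (WithBot α)) listLe := ⟨listLe_antisymm⟩
  -- the three key lists coincide
  have hCK : ∀ (ρ : Equiv.Perm (Fin k)),
      ((List.finRange k).flatMap fun p => canonP (T (ρ p))).Perm
        ((List.finRange k).flatMap fun i => canonP (T i)) :=
    fun ρ => perm_flat ρ (fun i => canonP (T i))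
  have hkeymap : ∀ (ρ : Equiv.Perm (Fin k)), (mRots T ρ).map keyF
      = ((mRots T ρ).map Fpair).map Prod.fst := by
    intro ρ; rw [List.map_map]; rfl
  have hperm1' : (L1.map keyF).Perm (((List.finRange k).flatMap fun i => canonP (T i)).map Prod.fst) := by
    refine (hperm1.map keyF).trans ?_
    rw [hkeymap σ, mRots_fpair]
    exact (hCK σ).map Prod.fst
  have hperm2' : (L2.map keyF).Perm (((List.finRange k).flatMap fun i => canonP (T i)).map Prod.fst) := by
    refine (hperm2.map keyF).trans ?_
    rw [hkeymap τ, mRots_fpair]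
    exact (hCK τ).map Prod.fst
  have hperm0' : (L0.map key0F).Perm (((List.finRange k).flatMap fun i => canonP (T i)).map Prod.fst) := by
    refine (hperm0.map key0F).trans ?_
    rw [dolRots_key, List.map_flatMap]
  have hs1 : (L1.map keyF).Pairwise listLe :=
    List.Pairwise.map keyF (fun _ _ h => listLe_keyF_mono h) hsort1
  have hs2 : (L2.map keyF).Pairwise listLe :=
    List.Pairwise.map keyF (fun _ _ h => listLe_keyF_mono h) hsort2
  have hs0 : (L0.map key0F).Pairwise listLe :=
    List.Pairwise.map key0F (fun _ _ h => listLe_key0F_mono h) hsort0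
  have hK12 : L1.map keyF = L2.map keyF :=
    List.Perm.eq_of_pairwise' hs1 hs2 (hperm1'.trans hperm2'.symm)
  have hK01 : L0.map key0F = L1.map keyF :=
    List.Perm.eq_of_pairwise' hs0 hs1 (hperm0'.trans hperm1'.symm)
  -- lengths
  have hlen12 : L1.length = L2.length := by
    have := congrArg List.length hK12; simpa using this
  have hlen01 : L0.length = L1.length := by
    have := congrArg List.length hK01; simpa using this
  -- p is within range
  have hp1 : p < L1.length := by
    by_contra h
    push_neg at h
    exact hp (by rw [mdolOf, mdolOf, List.getElem?_eq_none (by simpa using h),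
      List.getElem?_eq_none (by simp; omega)])
  have hp2 : p < L2.length := by omega
  set R1 := L1[p]'hp1 with hR1
  set R2 := L2[p]'hp2 with hR2
  have e1 : (mdolOf L1)[p]? = some (lastOut R1) := by
    rw [mdolOf, List.getElem?_map, List.getElem?_eq_getElem hp1]; rfl
  have e2 : (mdolOf L2)[p]? = some (lastOut R2) := by
    rw [mdolOf, List.getElem?_map, List.getElem?_eq_getElem hp2]; rfl
  have hlast : lastOut R1 ≠ lastOut R2 := by
    intro h; exact hp (by rw [e1, e2, h])
  have hkeyp : keyF R1 = keyF R2 := by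
    have h := congrArg (fun l => l[p]?) hK12
    simp only [List.getElem?_map, List.getElem?_eq_getElem hp1,
      List.getElem?_eq_getElem hp2] at h
    simpa using h
  -- structure of R1 and R2
  obtain ⟨i1, o1, ho1, hk1, hl1⟩ :=
    mem_mRots_struct T σ (hperm1.mem_iff.mp (hR1 ▸ List.getElem_mem hp1))
  obtain ⟨i2, o2, ho2, hk2, hl2⟩ :=
    mem_mRots_struct T τ (hperm2.mem_iff.mp (hR2 ▸ List.getElem_mem hp2))
  set U := (T i1).drop o1 with hU
  have hU2 : (T i2).drop o2 = U := dstrE_inj (by rw [← hk2, ← hkeyp, hk1])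
  have hprec : precChar (T i1) U ≠ precChar (T i2) U := by
    rw [← hl1, ← hU2, ← hl2]
    exact hlast
  have hij : i1 ≠ i2 := fun h => hprec (by rw [h])
  have hUi1 : U <:+ T i1 := List.drop_suffix o1 (T i1)
  have hUi2 : U <:+ T i2 := hU2 ▸ List.drop_suffix o2 (T i2)
  -- the rank interval
  have hrank := rankSet_eq T L0 hperm0 U
  have hpmem : p ∈ rankSet L0 U := by
    rw [hrank]
    show (L0.map key0F)[p]? = some (dstrE U)
    rw [hK01, List.getElem?_map, List.getElem?_eq_getElem hp1, ← hR1]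
    simp [hk1]
  set F : Finset ℕ := (Finset.range L0.length).filter
    (fun q => (L0.map key0F)[q]? = some (dstrE U)) with hF
  have hFS : rankSet L0 U = ↑F := by
    rw [hrank]
    ext q
    simp only [hF, Finset.coe_filter, Finset.mem_range, Set.mem_setOf_eq]
    constructor
    · intro h
      refine ⟨?_, h⟩
      rw [List.getElem?_eq_some_iff] at h
      obtain ⟨hlt, _⟩ := h
      simpa using hlt
    · exact fun h => h.2
  have hpF : p ∈ F := by
    have := hpmem
    rw [hFS] at this
    exact this
  have hne : F.Nonempty := ⟨p, hpF⟩
  refine ⟨U, F.min' hne, F.max' hne, ⟨i1, i2, hij, hUi1, hUi2, hprec⟩, ?_, ?_, ?_, ?_⟩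
  · constructor
    · rw [hFS]; exact_mod_cast F.min'_mem hne
    · intro x hx
      rw [hFS] at hx
      exact F.min'_le x hx
  · constructor
    · rw [hFS]; exact_mod_cast F.max'_mem hne
    · intro x hx
      rw [hFS] at hx
      exact F.le_max' x hx
  · exact F.min'_le p hpF
  · exact F.le_max' p hpF
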